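/- Let (T, ≤) be a finite tree. Suppose given, for each non-maximal element t ∈ T, a total order on the set of immediate successors of t (a planar structure). Define a relation ⪯ on T by: e ⪯ f iff e = f, or (with e' and f' the unique elements below e and f respectively that are either equal or siblings, as in the sibling lemma) e' ⪯_v f' in the total order on the vertex containing them when e' ≠ f', or e ≤ f when e' = f'. Then ⪯ is a total order on T extending the partial order ≤. -/

import Mathlib

/-- A planar structure (a total order `po g` on the set of immediate successors of
each element `g`) induces a total order `ple` on a finite tree extending the partial
order: `e ⪯ f` iff `e ≤ f`, or the unique siblings `e' ≤ e`, `f' ≤ f` over a common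
element `g` satisfy `e' ⪯_g f'`. -/
theorem stmt2 {T : Type} [Fintype T] [PartialOrder T]
    (r : T) (hroot : ∀ t, r ≤ t)
    (hchain : ∀ e s t : T, s ≤ e → t ≤ e → s ≤ t ∨ t ≤ s)
    (po : T → T → T → Prop)
    (hpo_refl : ∀ g x, g ⋖ x → po g x x)
    (hpo_trans : ∀ g x y z, g ⋖ x → g ⋖ y → g ⋖ z → po g x y → po g y z → po g x z)
    (hpo_anti : ∀ g x y, g ⋖ x → g ⋖ y → po g x y → po g y x → x = y)
    (hpo_total : ∀ g x y, g ⋖ x → g ⋖ y → po g x y ∨ po g y x)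
    (ple : T → T → Prop)
    (hdef : ∀ e f, ple e f ↔
      (e ≤ f ∨ ∃ g e' f' : T, g ⋖ e' ∧ g ⋖ f' ∧ e' ≠ f' ∧ e' ≤ e ∧ f' ≤ f ∧ po g e' f')) :
    (∀ e, ple e e) ∧
    (∀ e f g, ple e f → ple f g → ple e g) ∧
    (∀ e f, ple e f → ple f e → e = f) ∧
    (∀ e f, ple e f ∨ ple f e) ∧
    (∀ e f, e ≤ f → ple e f) := by
  -- cover "sandwich" lemma
  have covEq : ∀ {g x y : T}, g ⋖ x → g < y → y ≤ x → y = x := by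
    intro g x y hc hy hyx
    rcases lt_or_eq_of_le hyx with h | h
    · exact absurd h (hc.2 hy)
    · exact h
  -- siblings force incomparability
  have sib_incomp : ∀ {g e' f' e f : T}, g ⋖ e' → g ⋖ f' → e' ≠ f' →
      e' ≤ e → f' ≤ f → ¬ e ≤ f := by
    intro g e' f' e f he hf hne hee hff hef
    rcases hchain f e' f' (hee.trans hef) hff with h | h
    · exact hne (covEq hf he.1 h)
    · exact hne (covEq he hf.1 h).symm
  -- uniqueness of the sibling triple
  have sib_unique : ∀ {e f g1 e1 f1 g2 e2 f2 : T},
      g1 ⋖ e1 → g1 ⋖ f1 → e1 ≠ f1 → e1 ≤ e → f1 ≤ f →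
      g2 ⋖ e2 → g2 ⋖ f2 → e2 ≠ f2 → e2 ≤ e → f2 ≤ f →
      g1 = g2 ∧ e1 = e2 ∧ f1 = f2 := by
    have key : ∀ {e f g1 e1 f1 g2 e2 f2 : T},
        g1 ⋖ e1 → g1 ⋖ f1 → e1 ≠ f1 → e1 ≤ e → f1 ≤ f →
        g2 ⋖ e2 → g2 ⋖ f2 → e2 ≠ f2 → e2 ≤ e → f2 ≤ f →
        g1 ≤ g2 → g1 = g2 := by
      intro e f g1 e1 f1 g2 e2 f2 hce1 hcf1 hne1 he1 hf1 hce2 hcf2 hne2 he2 hf2 h12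
      have hg2e : g2 ≤ e := le_trans hce2.1.le he2
      have hg2f : g2 ≤ f := le_trans hcf2.1.le hf2
      -- e1 ≤ g2 is impossible
      have hno : ¬ e1 ≤ g2 := by
        intro h
        exact sib_incomp hce1 hcf1 hne1 (le_refl e1) hf1 (h.trans hg2f)
      rcases hchain e e1 g2 he1 hg2e with h | h
      · exact absurd h hno
      · -- g2 ≤ e1
        rcases lt_or_eq_of_le h12 with hlt | heq
        · rcases lt_or_eq_of_le h with hlt2 | heq2
          · exact absurd hlt2 (hce1.2 hlt)
          · exact absurd (le_of_eq heq2.symm) hno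
        · exact heq
    intro e f g1 e1 f1 g2 e2 f2 hce1 hcf1 hne1 he1 hf1 hce2 hcf2 hne2 he2 hf2
    have hg : g1 = g2 := by
      rcases hchain e g1 g2 (le_trans hce1.1.le he1) (le_trans hce2.1.le he2) with h | h
      · exact key hce1 hcf1 hne1 he1 hf1 hce2 hcf2 hne2 he2 hf2 h
      · exact (key hce2 hcf2 hne2 he2 hf2 hce1 hcf1 hne1 he1 hf1 h).symm
    subst hg
    have he : e1 = e2 := by
      rcases hchain e e1 e2 he1 he2 with h | h
      · exact covEq hce2 hce1.1 h
      · exact (covEq hce1 hce2.1 h).symm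
    have hf : f1 = f2 := by
      rcases hchain f f1 f2 hf1 hf2 with h | h
      · exact covEq hcf2 hcf1.1 h
      · exact (covEq hcf1 hcf2.1 h).symm
    exact ⟨rfl, he, hf⟩
  -- existence of the sibling triple for incomparable elements
  have sib_exists : ∀ e f : T, ¬ e ≤ f → ¬ f ≤ e →
      ∃ g e' f', g ⋖ e' ∧ g ⋖ f' ∧ e' ≠ f' ∧ e' ≤ e ∧ f' ≤ f := by
    intro e f hef hfe
    -- greatest common lower bound
    obtain ⟨g, ⟨hge, hgf⟩, hgmax⟩ :=
      Set.Finite.exists_maximalFor id {x : T | x ≤ e ∧ x ≤ f} (Set.toFinite _)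
        ⟨r, hroot e, hroot f⟩
    have hge' : g < e := lt_of_le_of_ne hge (by rintro rfl; exact hef hgf)
    have hgf' : g < f := lt_of_le_of_ne hgf (by rintro rfl; exact hfe hge)
    -- minimal elements above g below e (resp. f)
    have build : ∀ t : T, g < t → ∃ t', g ⋖ t' ∧ t' ≤ t := by
      intro t hgt
      obtain ⟨t', ⟨hgt', ht'⟩, hmin⟩ :=
        Set.Finite.exists_minimalFor id {x : T | g < x ∧ x ≤ t} (Set.toFinite _)
          ⟨t, hgt, le_refl t⟩
      refine ⟨t', ⟨hgt', ?_⟩, ht'⟩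
      intro c hgc hct'
      exact absurd (hmin (j := c) ⟨hgc, hct'.le.trans ht'⟩ hct'.le) hct'.not_ge
    obtain ⟨e', hce', he'⟩ := build e hge'
    obtain ⟨f', hcf', hf'⟩ := build f hgf'
    refine ⟨g, e', f', hce', hcf', ?_, he', hf'⟩
    rintro rfl
    exact absurd (hgmax (j := e') ⟨he', hf'⟩ hce'.1.le) hce'.1.not_ge
  refine ⟨?_, ?_, ?_, ?_, ?_⟩
  · -- reflexivity
    intro e; exact (hdef e e).2 (Or.inl le_rfl)
  · -- transitivity
    intro a b c hab hbc
    rw [hdef] at hab hbc ⊢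
    rcases hab with hab | ⟨h1, e1, f1, hce1, hcf1, hne1, he1, hf1, hpo1⟩
    · rcases hbc with hbc | ⟨h2, f2, g2, hcf2, hcg2, hne2, hf2, hg2, hpo2⟩
      · exact Or.inl (hab.trans hbc)
      · -- a ≤ b, and a triple for (b,c)
        rcases hchain b a h2 hab (le_trans hcf2.1.le hf2) with h | h
        · exact Or.inl (h.trans (le_trans hcg2.1.le hg2))
        · rcases hchain b a f2 hab hf2 with h' | h'
          · rcases lt_or_eq_of_le h with hlt | heq
            · exact Or.inr ⟨h2, f2, g2, hcf2, hcg2, hne2,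
                le_of_eq (covEq hcf2 hlt h').symm, hg2, hpo2⟩
            · exact Or.inl ((le_of_eq heq.symm).trans (le_trans hcg2.1.le hg2))
          · exact Or.inr ⟨h2, f2, g2, hcf2, hcg2, hne2, h', hg2, hpo2⟩
    · rcases hbc with hbc | ⟨h2, f2, g2, hcf2, hcg2, hne2, hf2, hg2, hpo2⟩
      · exact Or.inr ⟨h1, e1, f1, hce1, hcf1, hne1, he1, hf1.trans hbc, hpo1⟩
      · -- two triples; compare h1 and h2
        have hh1b : h1 ≤ b := le_trans hcf1.1.le hf1
        have hh2b : h2 ≤ b := le_trans hcf2.1.le hf2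
        rcases hchain b h1 h2 hh1b hh2b with h | h
        · rcases lt_or_eq_of_le h with hlt | heq
          · -- h1 < h2 : then f1 ≤ h2
            have hf1h2 : f1 ≤ h2 := by
              rcases hchain b f1 h2 hf1 hh2b with h' | h'
              · exact h'
              · rcases lt_or_eq_of_le h' with hlt2 | heq2
                · exact absurd hlt2 (hcf1.2 hlt)
                · exact le_of_eq heq2.symm
            exact Or.inr ⟨h1, e1, f1, hce1, hcf1, hne1, he1,
              hf1h2.trans (le_trans hcg2.1.le hg2), hpo1⟩
          · -- h1 = h2
            subst heq
            have hff : f1 = f2 := by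
              rcases hchain b f1 f2 hf1 hf2 with h' | h'
              · exact covEq hcf2 hcf1.1 h'
              · exact (covEq hcf1 hcf2.1 h').symm
            subst hff
            by_cases heg : e1 = g2
            · subst heg
              exact absurd (hpo_anti h1 e1 f1 hce1 hcf1 hpo1 hpo2) hne1
            · exact Or.inr ⟨h1, e1, g2, hce1, hcg2, heg, he1, hg2,
                hpo_trans h1 e1 f1 g2 hce1 hcf1 hcg2 hpo1 hpo2⟩
        · rcases lt_or_eq_of_le h with hlt | heq
          · -- h2 < h1 : then f2 ≤ h1
            have hf2h1 : f2 ≤ h1 := by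
              rcases hchain b f2 h1 hf2 hh1b with h' | h'
              · exact h'
              · rcases lt_or_eq_of_le h' with hlt2 | heq2
                · exact absurd hlt2 (hcf2.2 hlt)
                · exact le_of_eq heq2.symm
            exact Or.inr ⟨h2, f2, g2, hcf2, hcg2, hne2,
              (hf2h1.trans hce1.1.le).trans he1, hg2, hpo2⟩
          · -- h2 = h1, same as above
            subst heq
            have hff : f1 = f2 := by
              rcases hchain b f1 f2 hf1 hf2 with h' | h'
              · exact covEq hcf2 hcf1.1 h'
              · exact (covEq hcf1 hcf2.1 h').symm
            subst hff
            by_cases heg : e1 = g2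
            · subst heg
              exact absurd (hpo_anti h2 e1 f1 hce1 hcf1 hpo1 hpo2) hne1
            · exact Or.inr ⟨h2, e1, g2, hce1, hcg2, heg, he1, hg2,
                hpo_trans h2 e1 f1 g2 hce1 hcf1 hcg2 hpo1 hpo2⟩
  · -- antisymmetry
    intro e f hef hfe
    rw [hdef] at hef hfe
    rcases hef with hef | ⟨g1, e1, f1, hce1, hcf1, hne1, he1, hf1, hpo1⟩
    · rcases hfe with hfe | ⟨g2, f2, e2, hcf2, hce2, hne2, hf2, he2, hpo2⟩
      · exact le_antisymm hef hfe
      · exact absurd hef (sib_incomp hce2 hcf2 (Ne.symm hne2) he2 hf2)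
    · rcases hfe with hfe | ⟨g2, f2, e2, hcf2, hce2, hne2, hf2, he2, hpo2⟩
      · exact absurd hfe (sib_incomp hcf1 hce1 (Ne.symm hne1) hf1 he1)
      · obtain ⟨hg, he, hf⟩ := sib_unique hce1 hcf1 hne1 he1 hf1
          hce2 hcf2 (Ne.symm hne2) he2 hf2
        subst hg; subst he; subst hf
        exact absurd (hpo_anti g1 e1 f1 hce1 hcf1 hpo1 hpo2) hne1
  · -- totality
    intro e f
    by_cases hef : e ≤ f
    · exact Or.inl ((hdef e f).2 (Or.inl hef))
    by_cases hfe : f ≤ e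
    · exact Or.inr ((hdef f e).2 (Or.inl hfe))
    obtain ⟨g, e', f', hce, hcf, hne, he', hf'⟩ := sib_exists e f hef hfe
    rcases hpo_total g e' f' hce hcf with h | h
    · exact Or.inl ((hdef e f).2 (Or.inr ⟨g, e', f', hce, hcf, hne, he', hf', h⟩))
    · exact Or.inr ((hdef f e).2 (Or.inr ⟨g, f', e', hcf, hce, Ne.symm hne, hf', he', h⟩))
  · -- extends ≤
    intro e f h
    exact (hdef e f).2 (Or.inl h)
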